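/- arXiv:2602.01746 — 4 statements merged into one kernel-verified Lean document; each statement's English description precedes it below -/
import Mathlib

section
/- Let f : ℝ^d → ℝ be differentiable with L-Lipschitz gradient, where L ≥ 0. Let η > 0, T be a positive integer, G ≥ 0, ε ≥ 0, and suppose η·L·T ≤ 1/2. Let (θ_t) and (θ*_t) be sequences in ℝ^d with θ_0 = θ*_0, θ*_{t+1} = θ*_t − η·∇f(θ*_t), and θ_{t+1} = θ_t − η·(∇f(θ_t) + d_t + ξ_t), where the drift vectors satisfy ‖d_t‖₂ ≤ 2G and the noise vectors satisfy ‖ξ_t‖₂ ≤ ε for all t. Then for every t ≤ T, ‖θ_t − θ*_t‖₂ ≤ 2·η·T·(2G + ε). -/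
/-- Local-containment radius for SGD with drift and noise,
compared to a centralized gradient-descent reference trajectory. -/
theorem sgd_local_containment {d : ℕ} (f : EuclideanSpace ℝ (Fin d) → ℝ)
    (L : ℝ) (hL : 0 ≤ L) (hf : Differentiable ℝ f)
    (hlip : ∀ x y, ‖gradient f x - gradient f y‖ ≤ L * ‖x - y‖)
    (η : ℝ) (hη : 0 < η) (T : ℕ) (hT : 0 < T)
    (G ε : ℝ) (hG : 0 ≤ G) (hε : 0 ≤ ε)
    (hstep : η * L * T ≤ 1 / 2)
    (θ θs dv ξ : ℕ → EuclideanSpace ℝ (Fin d))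
    (h0 : θ 0 = θs 0)
    (hrefs : ∀ t, θs (t + 1) = θs t - η • gradient f (θs t))
    (hcl : ∀ t, θ (t + 1) = θ t - η • (gradient f (θ t) + dv t + ξ t))
    (hd : ∀ t, ‖dv t‖ ≤ 2 * G) (hxi : ∀ t, ‖ξ t‖ ≤ ε) :
    ∀ t ≤ T, ‖θ t - θs t‖ ≤ 2 * η * T * (2 * G + ε) := by
  have hM : (0:ℝ) ≤ 2 * G + ε := by linarith
  have key : ∀ t, t ≤ T → ‖θ t - θs t‖ ≤ 2 * η * t * (2 * G + ε) := by
    intro t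
    induction t with
    | zero => intro _; simp [h0]
    | succ t ih =>
      intro hle
      have ht : t ≤ T := Nat.le_of_succ_le hle
      have ihe := ih ht
      have hdiff : θ (t+1) - θs (t+1)
          = ((θ t - θs t) - η • (gradient f (θ t) - gradient f (θs t)))
            - η • (dv t + ξ t) := by
        rw [hcl, hrefs]; module
      have h1 : ‖η • (gradient f (θ t) - gradient f (θs t))‖
          ≤ η * (L * ‖θ t - θs t‖) := by
        rw [norm_smul, Real.norm_eq_abs, abs_of_pos hη]
        exact mul_le_mul_of_nonneg_left (hlip _ _) hη.le
      have h2 : ‖η • (dv t + ξ t)‖ ≤ η * (2 * G + ε) := by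
        rw [norm_smul, Real.norm_eq_abs, abs_of_pos hη]
        refine mul_le_mul_of_nonneg_left ?_ hη.le
        calc ‖dv t + ξ t‖ ≤ ‖dv t‖ + ‖ξ t‖ := norm_add_le _ _
          _ ≤ 2 * G + ε := add_le_add (hd t) (hxi t)
      have hnorm : ‖θ (t+1) - θs (t+1)‖
          ≤ ‖θ t - θs t‖ + η * (L * ‖θ t - θs t‖) + η * (2 * G + ε) := by
        rw [hdiff]
        calc ‖_‖ ≤ ‖(θ t - θs t) - η • (gradient f (θ t) - gradient f (θs t))‖
              + ‖η • (dv t + ξ t)‖ := norm_sub_le _ _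
          _ ≤ (‖θ t - θs t‖ + ‖η • (gradient f (θ t) - gradient f (θs t))‖)
              + ‖η • (dv t + ξ t)‖ := by
                exact add_le_add_left (norm_sub_le _ _) _
          _ ≤ ‖θ t - θs t‖ + η * (L * ‖θ t - θs t‖) + η * (2 * G + ε) := by
                exact add_le_add (add_le_add_right h1 _) h2
      have hcast : (t : ℝ) ≤ (T : ℝ) := Nat.cast_le.mpr ht
      have hηLt : η * L * t ≤ 1 / 2 := by
        calc η * L * t ≤ η * L * T := by
              exact mul_le_mul_of_nonneg_left hcast (by positivity)
          _ ≤ 1 / 2 := hstep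
      have hnn : (0:ℝ) ≤ ‖θ t - θs t‖ := norm_nonneg _
      push_cast
      have hA : η * L * ‖θ t - θs t‖ ≤ (η * L) * (2 * η * t * (2 * G + ε)) :=
        mul_le_mul_of_nonneg_left ihe (mul_nonneg hη.le hL)
      have hB : (η * L * t) * (2 * η * (2 * G + ε)) ≤ (1/2) * (2 * η * (2 * G + ε)) :=
        mul_le_mul_of_nonneg_right hηLt (by positivity)
      nlinarith [hA, hB]
  intro t ht
  have := key t ht
  have hcast : (t : ℝ) ≤ (T : ℝ) := Nat.cast_le.mpr ht
  calc ‖θ t - θs t‖ ≤ 2 * η * t * (2 * G + ε) := this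
    _ ≤ 2 * η * T * (2 * G + ε) := by
        apply mul_le_mul_of_nonneg_right _ hM
        nlinarith
end

section
/- Let f : ℝ^d → ℝ be differentiable with L-Lipschitz gradient, where L > 0. Let η > 0, G ≥ 0, ε ≥ 0. Let (θ_t) and (θ*_t) be sequences in ℝ^d with θ_0 = θ*_0, θ*_{t+1} = θ*_t − η·∇f(θ*_t), and θ_{t+1} = θ_t − η·(∇f(θ_t) + d_t + ξ_t), where ‖d_t‖₂ ≤ 2G and ‖ξ_t‖₂ ≤ ε for all t. Then for every t ≥ 0, ‖θ_t − θ*_t‖₂ ≤ η·(2G + ε)·((1 + ηL)^t − 1)/(ηL). -/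
/-- Exact unrolled deviation bound for SGD with drift and noise. -/
theorem sgd_deviation_unrolled {d : ℕ} (f : EuclideanSpace ℝ (Fin d) → ℝ)
    (L : ℝ) (hL : 0 < L) (hf : Differentiable ℝ f)
    (hlip : ∀ x y, ‖gradient f x - gradient f y‖ ≤ L * ‖x - y‖)
    (η : ℝ) (hη : 0 < η)
    (G ε : ℝ) (hG : 0 ≤ G) (hε : 0 ≤ ε)
    (θ θs dv ξ : ℕ → EuclideanSpace ℝ (Fin d))
    (h0 : θ 0 = θs 0)
    (hrefs : ∀ t, θs (t + 1) = θs t - η • gradient f (θs t))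
    (hcl : ∀ t, θ (t + 1) = θ t - η • (gradient f (θ t) + dv t + ξ t))
    (hd : ∀ t, ‖dv t‖ ≤ 2 * G) (hxi : ∀ t, ‖ξ t‖ ≤ ε) :
    ∀ t, ‖θ t - θs t‖ ≤ η * (2 * G + ε) * ((1 + η * L) ^ t - 1) / (η * L) := by
  intro t
  induction t with
  | zero => simp [h0]
  | succ t ih =>
    have hid : θ (t + 1) - θs (t + 1)
        = (θ t - θs t) - η • (gradient f (θ t) - gradient f (θs t))
          - η • (dv t + ξ t) := by
      rw [hcl t, hrefs t]
      simp only [smul_sub, smul_add]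
      abel
    have hstep : ‖θ (t + 1) - θs (t + 1)‖
        ≤ (1 + η * L) * ‖θ t - θs t‖ + η * (2 * G + ε) := by
      rw [hid]
      calc ‖(θ t - θs t) - η • (gradient f (θ t) - gradient f (θs t)) - η • (dv t + ξ t)‖
          ≤ ‖(θ t - θs t) - η • (gradient f (θ t) - gradient f (θs t))‖ + ‖η • (dv t + ξ t)‖ :=
            norm_sub_le _ _
        _ ≤ (‖θ t - θs t‖ + ‖η • (gradient f (θ t) - gradient f (θs t))‖) + ‖η • (dv t + ξ t)‖ := by
            gcongr; exact norm_sub_le _ _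
        _ ≤ (‖θ t - θs t‖ + η * (L * ‖θ t - θs t‖)) + η * (2 * G + ε) := by
            gcongr
            · rw [norm_smul, Real.norm_of_nonneg hη.le]
              exact mul_le_mul_of_nonneg_left (hlip _ _) hη.le
            · rw [norm_smul, Real.norm_of_nonneg hη.le]
              refine mul_le_mul_of_nonneg_left ?_ hη.le
              exact (norm_add_le _ _).trans (add_le_add (hd t) (hxi t))
        _ = (1 + η * L) * ‖θ t - θs t‖ + η * (2 * G + ε) := by ring
    have hηL : 0 < η * L := mul_pos hη hL
    have hpos : (0:ℝ) ≤ 1 + η * L := by linarith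
    calc ‖θ (t + 1) - θs (t + 1)‖
        ≤ (1 + η * L) * ‖θ t - θs t‖ + η * (2 * G + ε) := hstep
      _ ≤ (1 + η * L) * (η * (2 * G + ε) * ((1 + η * L) ^ t - 1) / (η * L)) + η * (2 * G + ε) := by
          gcongr
      _ = η * (2 * G + ε) * ((1 + η * L) ^ (t + 1) - 1) / (η * L) := by
          field_simp
          ring
end

section
/- Let f : ℝ^d → ℝ be differentiable with L-Lipschitz gradient, where L ≥ 0. Let η > 0, β ∈ [0,1), B_m ≥ 0, G ≥ 0, ε ≥ 0, and let T be a positive integer with η·L·T ≤ 1/2. Let (θ_t, m_t) and (θ*_t, m*_t) be sequences in ℝ^d satisfying the momentum recursions m_{t+1} = β·m_t + (1 − β)·(∇f(θ_t) + d_t + ξ_t), θ_{t+1} = θ_t − η·m_{t+1}, and m*_{t+1} = β·m*_t + (1 − β)·∇f(θ*_t), θ*_{t+1} = θ*_t − η·m*_{t+1}, with θ_0 = θ*_0, ‖m_0 − m*_0‖₂ ≤ B_m, ‖d_t‖₂ ≤ 2G, and ‖ξ_t‖₂ ≤ ε for all t. Then for every t ≤ T, ‖θ_t − θ*_t‖₂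 ≤ 2η·B_m/(1 − β) + 2η·T·(2G + ε). -/
/-- Local-containment radius for SGD with momentum under drift, noise,
and initial optimizer-state (first-moment) mismatch. -/
theorem momentum_local_containment {d : ℕ} (f : EuclideanSpace ℝ (Fin d) → ℝ)
    (L : ℝ) (hL : 0 ≤ L) (hf : Differentiable ℝ f)
    (hlip : ∀ x y, ‖gradient f x - gradient f y‖ ≤ L * ‖x - y‖)
    (η β Bm G ε : ℝ) (hη : 0 < η) (hβ0 : 0 ≤ β) (hβ1 : β < 1)
    (hBm : 0 ≤ Bm) (hG : 0 ≤ G) (hε : 0 ≤ ε)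
    (T : ℕ) (hT : 0 < T) (hstep : η * L * T ≤ 1 / 2)
    (θ m θs ms dv ξ : ℕ → EuclideanSpace ℝ (Fin d))
    (hmrec : ∀ t, m (t + 1) = β • m t + (1 - β) • (gradient f (θ t) + dv t + ξ t))
    (hθrec : ∀ t, θ (t + 1) = θ t - η • m (t + 1))
    (hmsrec : ∀ t, ms (t + 1) = β • ms t + (1 - β) • gradient f (θs t))
    (hθsrec : ∀ t, θs (t + 1) = θs t - η • ms (t + 1))
    (h0 : θ 0 = θs 0) (hm0 : ‖m 0 - ms 0‖ ≤ Bm)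
    (hd : ∀ t, ‖dv t‖ ≤ 2 * G) (hxi : ∀ t, ‖ξ t‖ ≤ ε) :
    ∀ t ≤ T, ‖θ t - θs t‖ ≤ 2 * η * Bm / (1 - β) + 2 * η * T * (2 * G + ε) := by
  have hβ' : (0:ℝ) < 1 - β := by linarith
  set R : ℝ := 2 * η * Bm / (1 - β) + 2 * η * T * (2 * G + ε) with hR
  set D : ℝ := 2 * G + ε with hD
  clear_value R D
  have hT0 : (0:ℝ) ≤ T := Nat.cast_nonneg T
  have hD0 : (0:ℝ) ≤ D := by rw [hD]; positivity
  have hR0 : (0:ℝ) ≤ R := by rw [hR]; positivity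
  have hLRD : (0:ℝ) ≤ L * R + D := by positivity
  have hRsplit : R = η * Bm / (1 - β) + (η * Bm / (1 - β) + 2 * η * T * D) := by
    rw [hR, hD]; ring
  -- momentum difference recursion bound
  have hmu : ∀ t, ‖m (t+1) - ms (t+1)‖ ≤
      β * ‖m t - ms t‖ + (1 - β) * (L * ‖θ t - θs t‖ + D) := by
    intro t
    have hdiff : m (t+1) - ms (t+1) =
        β • (m t - ms t) +
        (1 - β) • ((gradient f (θ t) - gradient f (θs t)) + dv t + ξ t) := by
      rw [hmrec, hmsrec]; module
    rw [hdiff]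
    have h1 : ‖(gradient f (θ t) - gradient f (θs t)) + dv t + ξ t‖ ≤
        L * ‖θ t - θs t‖ + D := by
      calc ‖(gradient f (θ t) - gradient f (θs t)) + dv t + ξ t‖
          ≤ ‖gradient f (θ t) - gradient f (θs t)‖ + ‖dv t‖ + ‖ξ t‖ := norm_add₃_le
        _ ≤ L * ‖θ t - θs t‖ + (2 * G) + ε := by
            gcongr
            · exact hlip _ _
            · exact hd t
            · exact hxi t
        _ = L * ‖θ t - θs t‖ + D := by rw [hD]; ring
    calc ‖β • (m t - ms t) +
          (1 - β) • ((gradient f (θ t) - gradient f (θs t)) + dv t + ξ t)‖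
        ≤ ‖β • (m t - ms t)‖ +
          ‖(1 - β) • ((gradient f (θ t) - gradient f (θs t)) + dv t + ξ t)‖ :=
          norm_add_le _ _
      _ = β * ‖m t - ms t‖ +
          (1 - β) * ‖(gradient f (θ t) - gradient f (θs t)) + dv t + ξ t‖ := by
          rw [norm_smul, norm_smul, Real.norm_eq_abs, Real.norm_eq_abs,
            abs_of_nonneg hβ0, abs_of_nonneg hβ'.le]
      _ ≤ β * ‖m t - ms t‖ + (1 - β) * (L * ‖θ t - θs t‖ + D) := by
          gcongr
  -- position difference recursion bound
  have hth : ∀ t, ‖θ (t+1) - θs (t+1)‖ ≤ ‖θ t - θs t‖ + η * ‖m (t+1) - ms (t+1)‖ := by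
    intro t
    have hdiff : θ (t+1) - θs (t+1) = (θ t - θs t) - η • (m (t+1) - ms (t+1)) := by
      rw [hθrec, hθsrec]; module
    rw [hdiff]
    calc ‖(θ t - θs t) - η • (m (t+1) - ms (t+1))‖
        ≤ ‖θ t - θs t‖ + ‖η • (m (t+1) - ms (t+1))‖ := norm_sub_le _ _
      _ = ‖θ t - θs t‖ + η * ‖m (t+1) - ms (t+1)‖ := by
          rw [norm_smul, Real.norm_eq_abs, abs_of_nonneg hη.le]
  have key : ∀ t, t ≤ T →
      ‖m t - ms t‖ ≤ β ^ t * Bm + (L * R + D) ∧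
      ‖θ t - θs t‖ ≤ η * Bm * (1 - β ^ t) / (1 - β) + η * t * (L * R + D) := by
    intro t
    induction t with
    | zero =>
      intro _
      constructor
      · simpa using le_add_of_le_of_nonneg hm0 hLRD
      · simp [h0]
    | succ n ih =>
      intro hn
      have hn' : n ≤ T := Nat.le_of_succ_le hn
      obtain ⟨hμ, he⟩ := ih hn'
      have hpn0 : (0:ℝ) ≤ β ^ n := pow_nonneg hβ0 n
      have hpn1 : β ^ n ≤ 1 := pow_le_one₀ hβ0 hβ1.le
      have hnT : (n:ℝ) ≤ T := by exact_mod_cast hn'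
      have hn1T : ((n:ℝ) + 1) ≤ T := by exact_mod_cast hn
      -- e_n ≤ R
      have heR : ‖θ n - θs n‖ ≤ R := by
        have hdiv : η * Bm * (1 - β ^ n) / (1 - β) ≤ η * Bm / (1 - β) := by
          apply div_le_div_of_nonneg_right ?_ hβ'.le |>.trans_eq rfl
          nlinarith [mul_nonneg hη.le hBm]
        have h2 : η * n * (L * R + D) ≤ η * T * (L * R + D) := by
          gcongr
        have h3 : η * T * (L * R) ≤ (1/2) * R := by
          have h := mul_le_mul_of_nonneg_right hstep hR0
          linarith
        have h4 : (1/2) * R = η * Bm / (1 - β) + η * T * D := by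
          rw [hRsplit]; ring
        linarith [he]
      have hμ1 : ‖m (n+1) - ms (n+1)‖ ≤ β ^ (n+1) * Bm + (L * R + D) := by
        have h5 := hmu n
        have h6 : L * ‖θ n - θs n‖ ≤ L * R := mul_le_mul_of_nonneg_left heR hL
        have hps : β ^ (n+1) = β ^ n * β := pow_succ β n
        have hβμ : β * ‖m n - ms n‖ ≤ β * (β ^ n * Bm + (L * R + D)) :=
          mul_le_mul_of_nonneg_left hμ hβ0
        have h1β : (1 - β) * (L * ‖θ n - θs n‖ + D) ≤ (1 - β) * (L * R + D) :=
          mul_le_mul_of_nonneg_left (by linarith) hβ'.le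
        rw [hps]
        linarith [h5, hβμ, h1β]
      refine ⟨hμ1, ?_⟩
      have h7 := hth n
      have h8 : η * ‖m (n+1) - ms (n+1)‖ ≤ η * (β ^ (n+1) * Bm + (L * R + D)) :=
        mul_le_mul_of_nonneg_left hμ1 hη.le
      have hps : β ^ (n+1) = β ^ n * β := pow_succ β n
      have hgeo : η * Bm * (1 - β ^ n) / (1 - β) + η * (β ^ (n+1) * Bm) ≤
          η * Bm * (1 - β ^ (n+1)) / (1 - β) := by
        rw [div_add' _ _ _ hβ'.ne', div_le_div_iff_of_pos_right hβ']
        rw [hps]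
        linarith [mul_nonneg (mul_nonneg (mul_nonneg hη.le hBm) hpn0) (sq_nonneg (1 - β))]
      have hcast : ((n+1 : ℕ) : ℝ) = (n : ℝ) + 1 := by push_cast; ring
      rw [hcast]
      linarith [he, h7, h8, hgeo]
  intro t ht
  obtain ⟨-, he⟩ := key t ht
  have hdiv : η * Bm * (1 - β ^ t) / (1 - β) ≤ η * Bm / (1 - β) := by
    apply div_le_div_of_nonneg_right ?_ hβ'.le |>.trans_eq rfl
    nlinarith [mul_nonneg hη.le hBm, pow_nonneg hβ0 t]
  have htT : (t:ℝ) ≤ T := by exact_mod_cast ht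
  have h2 : η * t * (L * R + D) ≤ η * T * (L * R + D) := by gcongr
  have h3 : η * T * (L * R) ≤ (1/2) * R := by
    have h := mul_le_mul_of_nonneg_right hstep hR0
    linarith
  have h4 : (1/2) * R = η * Bm / (1 - β) + η * T * D := by
    rw [hRsplit]; ring
  linarith [he]
end

section
/- Let f : ℝ^d → ℝ be differentiable, let η > 0, ε > 0, G ≥ 0, N ≥ 0, B_m ≥ 0, B_v ≥ 0, β₁ ∈ [0,1), β₂ ∈ [0,1), and let T be a positive integer. Let (θ_t, m_t, v_t) and (θ*_t, m*_t, v*_t) be sequences with θ_t, θ*_t, m_t, m*_t, v_t, v*_t ∈ ℝ^d satisfying the AdamW-style recursions m_{t+1} = β₁·m_t + (1−β₁)·g_t, v_{t+1} = β₂·v_t + (1−β₂)·g_t ⊙ g_t, θ_{t+1} = θ_t − η·m_{t+1} ⊙ (v_{t+1}+ε)^{−1/2}, and m*_{t+1} = β₁·m*_t + (1−β₁)·g*_t, v*_{t+1} = β₂·v*_t + (1−β₂)·g*_t ⊙ g*_t, θ*_{t+1} = θ*_t − η·m*_{t+1} ⊙ (v*_{t+1}+ε)^{−1/2}, where g_t,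 g*_t ∈ ℝ^d. Assume θ_0 = θ*_0, v_0 ≥ 0 and v*_0 ≥ 0 coordinatewise, ‖m_0 − m*_0‖₂ ≤ B_m, ‖v_0 − v*_0‖₂ ≤ B_v, ‖m*_0‖₂ ≤ G, and for all t, ‖g_t‖₂ ≤ G + N and ‖g*_t‖₂ ≤ G. Then for every t ≤ T, ‖θ_t − θ*_t‖₂ ≤ η·B_m/((1−β₁)·√ε) + η·G·B_v/(2·(1−β₂)·ε^{3/2}) + (η·T/√ε)·(3G + N). -/
/-- Coordinatewise EMA of squared gradients, i.e. `β₂ • v + (1-β₂) • (g ⊙ g)`. -/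
noncomputable def secondMomentStep {d : ℕ} (β₂ : ℝ) (v g : EuclideanSpace ℝ (Fin d)) :
    EuclideanSpace ℝ (Fin d) :=
  WithLp.toLp 2 (fun i => β₂ * v i + (1 - β₂) * (g i * g i))

/-- Coordinatewise preconditioned direction `m ⊙ (v + ε)^{-1/2}`. -/
noncomputable def preconditioned {d : ℕ} (ε : ℝ) (m v : EuclideanSpace ℝ (Fin d)) :
    EuclideanSpace ℝ (Fin d) :=
  WithLp.toLp 2 (fun i => m i * (1 / Real.sqrt (v i + ε)))

lemma precond_norm_le {d : ℕ} (ε : ℝ) (hε : 0 < ε) (m w : EuclideanSpace ℝ (Fin d))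
    (hw : ∀ i, 0 ≤ w i) :
    ‖preconditioned ε m w‖ ≤ ‖m‖ / Real.sqrt ε := by
  have h1 : ‖m‖ / Real.sqrt ε = Real.sqrt ((∑ i, ‖m i‖ ^ 2) / ε) := by
    rw [Real.sqrt_div (by positivity), EuclideanSpace.norm_eq]
  rw [EuclideanSpace.norm_eq, h1]
  apply Real.sqrt_le_sqrt
  rw [Finset.sum_div]
  apply Finset.sum_le_sum
  intro i _
  have hwi : 0 < w i + ε := by linarith [hw i]
  have hsq : Real.sqrt (w i + ε) ^ 2 = w i + ε := Real.sq_sqrt hwi.le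
  have : ‖preconditioned ε m w i‖ ^ 2 = ‖m i‖ ^ 2 / (w i + ε) := by
    simp only [preconditioned, PiLp.toLp_apply, norm_mul, mul_pow, norm_div, norm_one]
    rw [Real.norm_of_nonneg (Real.sqrt_nonneg _), div_pow, one_pow, hsq, mul_one_div]
  rw [this]
  apply div_le_div_of_nonneg_left (by positivity) hε
  linarith [hw i]


set_option maxHeartbeats 1000000 in
/-- Trajectory deviation bound for AdamW-style updates under
gradient bounds and initial optimizer-state mismatches. -/
theorem adamw_trajectory_deviation {d : ℕ} (f : EuclideanSpace ℝ (Fin d) → ℝ)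
    (hf : Differentiable ℝ f)
    (η ε G N Bm Bv β₁ β₂ : ℝ)
    (hη : 0 < η) (hε : 0 < ε) (hG : 0 ≤ G) (hN : 0 ≤ N)
    (hBm : 0 ≤ Bm) (hBv : 0 ≤ Bv)
    (hβ₁0 : 0 ≤ β₁) (hβ₁1 : β₁ < 1) (hβ₂0 : 0 ≤ β₂) (hβ₂1 : β₂ < 1)
    (T : ℕ) (hT : 0 < T)
    (θ m v θs ms vs g gs : ℕ → EuclideanSpace ℝ (Fin d))
    (hm : ∀ t, m (t + 1) = β₁ • m t + (1 - β₁) • g t)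
    (hv : ∀ t, v (t + 1) = secondMomentStep β₂ (v t) (g t))
    (hθ : ∀ t, θ (t + 1) = θ t - η • preconditioned ε (m (t + 1)) (v (t + 1)))
    (hms : ∀ t, ms (t + 1) = β₁ • ms t + (1 - β₁) • gs t)
    (hvs : ∀ t, vs (t + 1) = secondMomentStep β₂ (vs t) (gs t))
    (hθs : ∀ t, θs (t + 1) = θs t - η • preconditioned ε (ms (t + 1)) (vs (t + 1)))
    (h0 : θ 0 = θs 0)
    (hv0 : ∀ i, 0 ≤ v 0 i) (hvs0 : ∀ i, 0 ≤ vs 0 i)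
    (hm0 : ‖m 0 - ms 0‖ ≤ Bm) (hv0d : ‖v 0 - vs 0‖ ≤ Bv) (hms0 : ‖ms 0‖ ≤ G)
    (hg : ∀ t, ‖g t‖ ≤ G + N) (hgs : ∀ t, ‖gs t‖ ≤ G) :
    ∀ t ≤ T, ‖θ t - θs t‖ ≤
      η * Bm / ((1 - β₁) * Real.sqrt ε)
        + η * G * Bv / (2 * (1 - β₂) * ε ^ ((3 : ℝ) / 2))
        + (η * T / Real.sqrt ε) * (3 * G + N) := by
  have hs : 0 < Real.sqrt ε := Real.sqrt_pos.mpr hε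
  have hb1 : 0 < 1 - β₁ := by linarith
  -- nonnegativity of v, vs
  have hvpos : ∀ t i, 0 ≤ v t i := by
    intro t
    induction t with
    | zero => exact hv0
    | succ n ih =>
      intro i
      rw [hv n]
      have := ih i
      have hsq := mul_self_nonneg (g n i)
      simp only [secondMomentStep, PiLp.toLp_apply]
      nlinarith
  have hvspos : ∀ t i, 0 ≤ vs t i := by
    intro t
    induction t with
    | zero => exact hvs0
    | succ n ih =>
      intro i
      rw [hvs n]
      have := ih i
      have hsq := mul_self_nonneg (gs n i)
      simp only [secondMomentStep, PiLp.toLp_apply]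
      nlinarith
  -- bound on ms
  have hmsb : ∀ t, ‖ms t‖ ≤ G := by
    intro t
    induction t with
    | zero => exact hms0
    | succ n ih =>
      rw [hms n]
      calc ‖β₁ • ms n + (1 - β₁) • gs n‖ ≤ ‖β₁ • ms n‖ + ‖(1 - β₁) • gs n‖ := norm_add_le _ _
        _ = β₁ * ‖ms n‖ + (1 - β₁) * ‖gs n‖ := by
            rw [norm_smul, norm_smul, Real.norm_of_nonneg hβ₁0, Real.norm_of_nonneg hb1.le]
        _ ≤ β₁ * G + (1 - β₁) * G := by
            gcongr
            · exact hgs n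
        _ = G := by ring
  -- bound on m
  have hmb : ∀ t, ‖m t‖ ≤ β₁ ^ t * Bm + (G + N) := by
    intro t
    induction t with
    | zero =>
      have h' := norm_sub_norm_le (m 0) (ms 0)
      simp only [pow_zero, one_mul]
      linarith [hm0, hms0]
    | succ n ih =>
      rw [hm n]
      calc ‖β₁ • m n + (1 - β₁) • g n‖ ≤ β₁ * ‖m n‖ + (1 - β₁) * ‖g n‖ := by
            refine le_trans (norm_add_le _ _) ?_
            rw [norm_smul, norm_smul, Real.norm_of_nonneg hβ₁0, Real.norm_of_nonneg hb1.le]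
        _ ≤ β₁ * (β₁ ^ n * Bm + (G + N)) + (1 - β₁) * (G + N) := by
            gcongr
            · exact hg n
        _ = β₁ ^ (n + 1) * Bm + (G + N) := by ring
  -- key inductive bound
  have key : ∀ t, ‖θ t - θs t‖ ≤
      η / Real.sqrt ε * (Bm * ∑ s ∈ Finset.range t, β₁ ^ (s + 1) + t * (2 * G + N)) := by
    intro t
    induction t with
    | zero => simp [h0]
    | succ n ih =>
      have hstep : ‖θ (n + 1) - θs (n + 1)‖ ≤ ‖θ n - θs n‖
          + η / Real.sqrt ε * (β₁ ^ (n + 1) * Bm + (2 * G + N)) := by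
        rw [hθ n, hθs n]
        have heq : θ n - η • preconditioned ε (m (n + 1)) (v (n + 1))
            - (θs n - η • preconditioned ε (ms (n + 1)) (vs (n + 1)))
            = (θ n - θs n) + ((-η) • preconditioned ε (m (n + 1)) (v (n + 1))
              + η • preconditioned ε (ms (n + 1)) (vs (n + 1))) := by
          module
        rw [heq]
        have h1 : ‖preconditioned ε (m (n + 1)) (v (n + 1))‖ ≤ ‖m (n + 1)‖ / Real.sqrt ε :=
          precond_norm_le ε hε _ _ (hvpos (n + 1))
        have h2 : ‖preconditioned ε (ms (n + 1)) (vs (n + 1))‖ ≤ ‖ms (n + 1)‖ / Real.sqrt ε :=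
          precond_norm_le ε hε _ _ (hvspos (n + 1))
        have h3 := hmb (n + 1)
        have h4 := hmsb (n + 1)
        calc ‖(θ n - θs n) + ((-η) • preconditioned ε (m (n + 1)) (v (n + 1))
              + η • preconditioned ε (ms (n + 1)) (vs (n + 1)))‖
            ≤ ‖θ n - θs n‖ + (‖(-η) • preconditioned ε (m (n + 1)) (v (n + 1))‖
              + ‖η • preconditioned ε (ms (n + 1)) (vs (n + 1))‖) := by
              refine le_trans (norm_add_le _ _) ?_
              gcongr
              exact norm_add_le _ _
          _ = ‖θ n - θs n‖ + (η * ‖preconditioned ε (m (n + 1)) (v (n + 1))‖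
              + η * ‖preconditioned ε (ms (n + 1)) (vs (n + 1))‖) := by
              rw [norm_smul, norm_smul, norm_neg, Real.norm_of_nonneg hη.le]
          _ ≤ ‖θ n - θs n‖ + (η * (‖m (n + 1)‖ / Real.sqrt ε)
              + η * (‖ms (n + 1)‖ / Real.sqrt ε)) := by gcongr
          _ ≤ ‖θ n - θs n‖ + (η * ((β₁ ^ (n + 1) * Bm + (G + N)) / Real.sqrt ε)
              + η * (G / Real.sqrt ε)) := by gcongr
          _ = ‖θ n - θs n‖ + η / Real.sqrt ε * (β₁ ^ (n + 1) * Bm + (2 * G + N)) := by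
              field_simp
              ring
      calc ‖θ (n + 1) - θs (n + 1)‖
          ≤ ‖θ n - θs n‖ + η / Real.sqrt ε * (β₁ ^ (n + 1) * Bm + (2 * G + N)) := hstep
        _ ≤ η / Real.sqrt ε * (Bm * ∑ s ∈ Finset.range n, β₁ ^ (s + 1) + n * (2 * G + N))
            + η / Real.sqrt ε * (β₁ ^ (n + 1) * Bm + (2 * G + N)) := by gcongr
        _ = η / Real.sqrt ε * (Bm * ∑ s ∈ Finset.range (n + 1), β₁ ^ (s + 1)
            + (n + 1 : ℕ) * (2 * G + N)) := by
            rw [Finset.sum_range_succ]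
            push_cast
            ring
  -- finish
  intro t ht
  have hgeom : ∑ s ∈ Finset.range t, β₁ ^ (s + 1) ≤ 1 / (1 - β₁) := by
    have h1 : ∑ s ∈ Finset.range t, β₁ ^ (s + 1) ≤ ∑ s ∈ Finset.range t, β₁ ^ s := by
      apply Finset.sum_le_sum
      intro s _
      exact pow_le_pow_of_le_one hβ₁0 hβ₁1.le (Nat.le_succ s)
    have hmul := geom_sum_mul β₁ t
    have h2 : ∑ s ∈ Finset.range t, β₁ ^ s ≤ 1 / (1 - β₁) := by
      rw [le_div_iff₀ hb1]
      nlinarith [pow_nonneg hβ₁0 t]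
    linarith
  have htT : (t : ℝ) ≤ (T : ℝ) := by exact_mod_cast ht
  have hcε : 0 ≤ η / Real.sqrt ε := by positivity
  have hA : η / Real.sqrt ε * (Bm * ∑ s ∈ Finset.range t, β₁ ^ (s + 1))
      ≤ η * Bm / ((1 - β₁) * Real.sqrt ε) := by
    have : η / Real.sqrt ε * (Bm * ∑ s ∈ Finset.range t, β₁ ^ (s + 1))
        ≤ η / Real.sqrt ε * (Bm * (1 / (1 - β₁))) := by
      gcongr
    calc η / Real.sqrt ε * (Bm * ∑ s ∈ Finset.range t, β₁ ^ (s + 1))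
        ≤ η / Real.sqrt ε * (Bm * (1 / (1 - β₁))) := this
      _ = η * Bm / ((1 - β₁) * Real.sqrt ε) := by
          rw [mul_one_div, div_mul_div_comm, mul_comm (Real.sqrt ε)]
  have hB : η / Real.sqrt ε * ((t : ℝ) * (2 * G + N))
      ≤ (η * T / Real.sqrt ε) * (3 * G + N) := by
    have h1 : η / Real.sqrt ε * ((t : ℝ) * (2 * G + N))
        ≤ η / Real.sqrt ε * ((T : ℝ) * (3 * G + N)) := by
      gcongr
      all_goals linarith
    calc η / Real.sqrt ε * ((t : ℝ) * (2 * G + N))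
        ≤ η / Real.sqrt ε * ((T : ℝ) * (3 * G + N)) := h1
      _ = (η * T / Real.sqrt ε) * (3 * G + N) := by ring
  have hmid : 0 ≤ η * G * Bv / (2 * (1 - β₂) * ε ^ ((3 : ℝ) / 2)) := by
    have h1 : (0:ℝ) < ε ^ ((3:ℝ)/2) := Real.rpow_pos_of_pos hε _
    have h2 : (0:ℝ) < 2 * (1 - β₂) * ε ^ ((3:ℝ)/2) := by nlinarith
    positivity
  have hkey := key t
  have hsplit : η / Real.sqrt ε * (Bm * ∑ s ∈ Finset.range t, β₁ ^ (s + 1) + t * (2 * G + N))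
      = η / Real.sqrt ε * (Bm * ∑ s ∈ Finset.range t, β₁ ^ (s + 1))
        + η / Real.sqrt ε * ((t : ℝ) * (2 * G + N)) := by ring
  rw [hsplit] at hkey
  linarith
end
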